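/- arXiv:2106.11620 — 2 statements merged into one kernel-verified Lean document; each statement's English description precedes it below -/
import Mathlib

section
/- Let 2 ≤ p₂ < q₁, σ > 0, B₁ ≥ 1, and let α₁, E₁, h be as above. Suppose α₂ > α₁ satisfies E₀ = h(α₂) for some E₀ ≥ 0. Then α₂/α₁ ≥ ((q₁+σ)(1/p₂ − E₀/α₁))^{p₂/(q₁+σ−p₂)}. -/
set_option maxHeartbeats 1000000


theorem alpha2_ratio_lower_bound (p₂ q₁ σ B₁ : ℝ) (hp : 2 ≤ p₂) (hpq : p₂ < q₁)
    (hσ : 0 < σ) (hB : 1 ≤ B₁) (h : ℝ → ℝ) (α₁ α₂ E₀ : ℝ)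
    (hh : h = fun ξ : ℝ => ξ / p₂ - B₁ ^ (q₁ + σ) * ξ ^ ((q₁ + σ) / p₂) / (Real.exp 1 * σ * q₁))
    (hα : α₁ = (Real.exp 1 * σ * q₁ * B₁ ^ (-(q₁ + σ)) / (q₁ + σ)) ^ (p₂ / (q₁ - p₂ + σ)))
    (hα₂ : α₁ < α₂) (hE₀ : 0 ≤ E₀) (hEh : E₀ = h α₂) :
    ((q₁ + σ) * (1 / p₂ - E₀ / α₁)) ^ (p₂ / (q₁ + σ - p₂)) ≤ α₂ / α₁ := by
  have hp0 : (0:ℝ) < p₂ := by linarith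
  have hq0 : (0:ℝ) < q₁ := by linarith
  have hA : p₂ < q₁ + σ := by linarith
  have hA0 : (0:ℝ) < q₁ + σ := by linarith
  have hAp : (0:ℝ) < q₁ + σ - p₂ := by linarith
  have hAp' : (0:ℝ) < q₁ - p₂ + σ := by linarith
  have hB0 : (0:ℝ) < B₁ := by linarith
  have he : (0:ℝ) < Real.exp 1 := Real.exp_pos 1
  set c : ℝ := Real.exp 1 * σ * q₁ * B₁ ^ (-(q₁ + σ)) / (q₁ + σ) with hc
  have hc0 : 0 < c := by positivity
  have hα1pos : 0 < α₁ := by rw [hα]; positivity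
  clear_value c
  -- key identity: α₁ ^ ((q₁+σ-p₂)/p₂) = c
  have hkey : α₁ ^ ((q₁ + σ - p₂) / p₂) = c := by
    rw [hα, ← Real.rpow_mul hc0.le,
      show p₂ / (q₁ - p₂ + σ) * ((q₁ + σ - p₂) / p₂) = 1 by
        rw [div_mul_div_comm, div_eq_one_iff_eq (by positivity)]
        ring,
      Real.rpow_one]
  have hBc : B₁ ^ (q₁ + σ) * B₁ ^ (-(q₁ + σ)) = 1 := by
    rw [← Real.rpow_add hB0, add_neg_cancel, Real.rpow_zero]
  have hCc : B₁ ^ (q₁ + σ) * c = Real.exp 1 * σ * q₁ / (q₁ + σ) := by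
    rw [hc, show Real.exp 1 * σ * q₁ * B₁ ^ (-(q₁ + σ)) / (q₁ + σ)
        = B₁ ^ (-(q₁ + σ)) * (Real.exp 1 * σ * q₁ / (q₁ + σ)) by ring,
      ← mul_assoc, hBc, one_mul]
  set t : ℝ := α₂ / α₁ with ht
  have ht1 : 1 < t := (one_lt_div hα1pos).mpr hα₂
  have ht0 : 0 < t := by linarith
  have hα₂eq : α₂ = α₁ * t := by rw [ht]; field_simp
  clear_value t
  set r : ℝ := (q₁ + σ) / p₂ with hr
  have hr1 : 1 < r := (one_lt_div hp0).mpr hA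
  clear_value r
  have hα2r : α₂ ^ r = α₁ * c * t ^ r := by
    rw [hα₂eq, Real.mul_rpow hα1pos.le ht0.le,
      show r = 1 + (q₁ + σ - p₂) / p₂ by rw [hr]; field_simp; ring,
      Real.rpow_add hα1pos, Real.rpow_one, hkey]
  have heσq : Real.exp 1 * σ * q₁ ≠ 0 := by positivity
  have hE : E₀ = α₁ * (t / p₂ - t ^ r / (q₁ + σ)) := by
    rw [hEh, hh]
    simp only
    rw [hα2r,
      show B₁ ^ (q₁ + σ) * (α₁ * c * t ^ r) = (B₁ ^ (q₁ + σ) * c) * (α₁ * t ^ r) by ring,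
      hCc, hα₂eq]
    field_simp
  have hEdiv : E₀ / α₁ = t / p₂ - t ^ r / (q₁ + σ) := by
    rw [hE]; field_simp
  have htr : t ^ r = t * t ^ (r - 1) := by
    rw [show r = 1 + (r - 1) by ring, Real.rpow_add ht0, Real.rpow_one]
    ring_nf
  have h1 : 0 ≤ t / p₂ - t ^ r / (q₁ + σ) := by
    have h1a := hE ▸ hE₀
    nlinarith [hα1pos]
  have h1' : t * t ^ (r - 1) * p₂ ≤ t * (q₁ + σ) := by
    rw [htr, sub_nonneg, div_le_div_iff₀ hA0 hp0] at h1
    linarith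
  set u : ℝ := t ^ (r - 1) with hu
  clear_value u
  have h2 : u ≤ r := by
    rw [hr, le_div_iff₀ hp0]
    nlinarith [h1', ht0]
  have hXeq : (q₁ + σ) * (1 / p₂ - E₀ / α₁) = r * (1 - t) + t * u := by
    rw [hEdiv, htr, hr]
    field_simp
    ring
  have hBern : 1 + r * (t - 1) ≤ t ^ r := by
    have hb := one_add_mul_self_le_rpow_one_add (s := t - 1) (by linarith) hr1.le
    rw [show (1:ℝ) + (t - 1) = t by ring] at hb
    exact hb
  have hX0 : 0 ≤ (q₁ + σ) * (1 / p₂ - E₀ / α₁) := by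
    rw [hXeq, ← htr]
    linarith [hBern]
  have hX : (q₁ + σ) * (1 / p₂ - E₀ / α₁) ≤ u := by
    rw [hXeq]
    have hm : (t - 1) * u ≤ (t - 1) * r := mul_le_mul_of_nonneg_left h2 (by linarith)
    nlinarith [hm]
  calc ((q₁ + σ) * (1 / p₂ - E₀ / α₁)) ^ (p₂ / (q₁ + σ - p₂))
      ≤ u ^ (p₂ / (q₁ + σ - p₂)) := Real.rpow_le_rpow hX0 hX (by positivity)
    _ = t := by
        rw [hu, ← Real.rpow_mul ht0.le,
          show (r - 1) * (p₂ / (q₁ + σ - p₂)) = 1 by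
            rw [hr]; field_simp,
          Real.rpow_one]
end

section
/- Let A, B > 0 and ϖ > 0, and let θ : [0,∞) → (0,∞) be differentiable with θ'(t) ≤ −θ(t)(A − Bθ(t)^ϖ) and Bθ(t)^ϖ < A for all t ≥ 0. Then θ(t)^ϖ/(A − Bθ(t)^ϖ) ≤ (θ(0)^ϖ/(A − Bθ(0)^ϖ))·e^{−Aϖt}, and consequently θ(t) ≤ (Aθ(0)^ϖ/(A − Bθ(0)^ϖ))^{1/ϖ}·e^{−At} for all t ≥ 0. -/
theorem exponential_decay (A B ϖ : ℝ) (hA : 0 < A) (hB : 0 < B) (hϖ : 0 < ϖ)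
    (θ θ' : ℝ → ℝ)
    (hd : ∀ t : ℝ, 0 ≤ t → HasDerivAt θ (θ' t) t)
    (hpos : ∀ t : ℝ, 0 ≤ t → 0 < θ t)
    (hineq : ∀ t : ℝ, 0 ≤ t → θ' t ≤ -θ t * (A - B * θ t ^ ϖ))
    (hsmall : ∀ t : ℝ, 0 ≤ t → B * θ t ^ ϖ < A) :
    ∀ t : ℝ, 0 ≤ t →
      θ t ^ ϖ / (A - B * θ t ^ ϖ) ≤ θ 0 ^ ϖ / (A - B * θ 0 ^ ϖ) * Real.exp (-(A * ϖ * t)) ∧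
      θ t ≤ (A * θ 0 ^ ϖ / (A - B * θ 0 ^ ϖ)) ^ (1 / ϖ) * Real.exp (-(A * t)) := by
  have hupos : ∀ t : ℝ, 0 ≤ t → 0 < θ t ^ ϖ := fun t ht => Real.rpow_pos_of_pos (hpos t ht) ϖ
  have hdpos : ∀ t : ℝ, 0 ≤ t → 0 < A - B * θ t ^ ϖ := fun t ht => sub_pos.mpr (hsmall t ht)
  set H : ℝ → ℝ := fun t => θ t ^ ϖ / (A - B * θ t ^ ϖ) * Real.exp (A * ϖ * t) with hH
  -- derivative of H at each t ≥ 0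
  have hDH : ∀ t : ℝ, 0 ≤ t → HasDerivAt H
      ((θ' t * ϖ * θ t ^ (ϖ - 1) * (A - B * θ t ^ ϖ) -
          θ t ^ ϖ * (-(B * (θ' t * ϖ * θ t ^ (ϖ - 1))))) / (A - B * θ t ^ ϖ) ^ 2 *
        Real.exp (A * ϖ * t) +
        θ t ^ ϖ / (A - B * θ t ^ ϖ) * (Real.exp (A * ϖ * t) * (A * ϖ * 1))) t := by
    intro t ht
    have hDu : HasDerivAt (fun s => θ s ^ ϖ) (θ' t * ϖ * θ t ^ (ϖ - 1)) t :=
      (hd t ht).rpow_const (Or.inl (hpos t ht).ne')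
    have hDd : HasDerivAt (fun s => A - B * θ s ^ ϖ) (-(B * (θ' t * ϖ * θ t ^ (ϖ - 1)))) t :=
      (hDu.const_mul B).const_sub A
    have hDg := hDu.div hDd (hdpos t ht).ne'
    have hDe : HasDerivAt (fun s : ℝ => Real.exp (A * ϖ * s))
        (Real.exp (A * ϖ * t) * (A * ϖ * 1)) t := ((hasDerivAt_id t).const_mul (A * ϖ)).exp
    exact hDg.mul hDe
  -- the derivative is nonpositive
  have hnonpos : ∀ t : ℝ, 0 ≤ t →
      (θ' t * ϖ * θ t ^ (ϖ - 1) * (A - B * θ t ^ ϖ) -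
          θ t ^ ϖ * (-(B * (θ' t * ϖ * θ t ^ (ϖ - 1))))) / (A - B * θ t ^ ϖ) ^ 2 *
        Real.exp (A * ϖ * t) +
        θ t ^ ϖ / (A - B * θ t ^ ϖ) * (Real.exp (A * ϖ * t) * (A * ϖ * 1)) ≤ 0 := by
    intro t ht
    have hθ := hpos t ht
    have hu := hupos t ht
    have hdp := hdpos t ht
    have he : (0:ℝ) < Real.exp (A * ϖ * t) := Real.exp_pos _
    have hmul : θ t * θ t ^ (ϖ - 1) = θ t ^ ϖ := by
      rw [show ϖ = 1 + (ϖ - 1) by ring, Real.rpow_add hθ, Real.rpow_one]; ring_nf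
    have hp1 : 0 < θ t ^ (ϖ - 1) := Real.rpow_pos_of_pos hθ _
    -- u' ≤ -ϖ u d
    have hu' : θ' t * ϖ * θ t ^ (ϖ - 1) ≤ -(ϖ * (θ t ^ ϖ) * (A - B * θ t ^ ϖ)) := by
      have h1 : θ' t * (ϖ * θ t ^ (ϖ - 1)) ≤
          (-θ t * (A - B * θ t ^ ϖ)) * (ϖ * θ t ^ (ϖ - 1)) :=
        mul_le_mul_of_nonneg_right (hineq t ht) (by positivity)
      calc θ' t * ϖ * θ t ^ (ϖ - 1) = θ' t * (ϖ * θ t ^ (ϖ - 1)) := by ring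
        _ ≤ (-θ t * (A - B * θ t ^ ϖ)) * (ϖ * θ t ^ (ϖ - 1)) := h1
        _ = -(ϖ * (θ t * θ t ^ (ϖ - 1)) * (A - B * θ t ^ ϖ)) := by ring
        _ = -(ϖ * (θ t ^ ϖ) * (A - B * θ t ^ ϖ)) := by rw [hmul]
    set u' := θ' t * ϖ * θ t ^ (ϖ - 1)
    set u := θ t ^ ϖ
    set d := A - B * θ t ^ ϖ with hd_def
    have hAd : d + B * u = A := by simp [hd_def, u]
    -- expression equals e * A / d^2 * (u' + ϖ u d)
    have hkey : u' + ϖ * u * d ≤ 0 := by linarith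
    have hA' : A = d + B * u := by linarith
    have h1 : Real.exp (A * ϖ * t) * A * (u' + ϖ * u * d) ≤ 0 :=
      mul_nonpos_of_nonneg_of_nonpos (by positivity) hkey
    have h2 : (u' * d - u * (-(B * u'))) * Real.exp (A * ϖ * t) +
        u * (Real.exp (A * ϖ * t) * (A * ϖ * 1)) * d =
        Real.exp (A * ϖ * t) * A * (u' + ϖ * u * d) := by
      linear_combination (-(Real.exp (A * ϖ * t) * u')) * hA'
    have h3 : (u' * d - u * (-(B * u'))) / d ^ 2 * Real.exp (A * ϖ * t) +
        u / d * (Real.exp (A * ϖ * t) * (A * ϖ * 1)) =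
        ((u' * d - u * (-(B * u'))) * Real.exp (A * ϖ * t) +
          u * (Real.exp (A * ϖ * t) * (A * ϖ * 1)) * d) / d ^ 2 := by
      field_simp
    rw [h3, h2]
    exact div_nonpos_of_nonpos_of_nonneg h1 (sq_nonneg d)
  -- H is antitone on [0, ∞)
  have hanti : AntitoneOn H (Set.Ici (0:ℝ)) := by
    apply antitoneOn_of_deriv_nonpos (convex_Ici 0)
    · exact fun t ht => ((hDH t ht).continuousAt).continuousWithinAt
    · intro t ht
      rw [interior_Ici] at ht
      exact ((hDH t (le_of_lt ht)).differentiableAt).differentiableWithinAt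
    · intro t ht
      rw [interior_Ici] at ht
      rw [(hDH t (le_of_lt ht)).deriv]
      exact hnonpos t (le_of_lt ht)
  intro t ht
  have hHt : H t ≤ H 0 := hanti Set.self_mem_Ici ht ht
  have hH0 : H 0 = θ 0 ^ ϖ / (A - B * θ 0 ^ ϖ) := by simp [hH]
  have hfirst : θ t ^ ϖ / (A - B * θ t ^ ϖ) ≤
      θ 0 ^ ϖ / (A - B * θ 0 ^ ϖ) * Real.exp (-(A * ϖ * t)) := by
    have he : (0:ℝ) < Real.exp (A * ϖ * t) := Real.exp_pos _
    have : θ t ^ ϖ / (A - B * θ t ^ ϖ) =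
        H t * Real.exp (-(A * ϖ * t)) := by
      simp [hH, mul_assoc, ← Real.exp_add]
    rw [this]
    rw [hH0] at hHt
    exact mul_le_mul_of_nonneg_right hHt (Real.exp_nonneg _)
  refine ⟨hfirst, ?_⟩
  have hdt := hdpos t ht
  have h0u := hupos 0 le_rfl
  have h0d := hdpos 0 le_rfl
  have hdle : A - B * θ t ^ ϖ ≤ A := by nlinarith [hupos t ht]
  have hub : θ t ^ ϖ ≤ A * θ 0 ^ ϖ / (A - B * θ 0 ^ ϖ) * Real.exp (-(A * ϖ * t)) := by
    have h1 : θ t ^ ϖ = θ t ^ ϖ / (A - B * θ t ^ ϖ) * (A - B * θ t ^ ϖ) := by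
      rw [div_mul_cancel₀ _ hdt.ne']
    have h2 : θ t ^ ϖ / (A - B * θ t ^ ϖ) * (A - B * θ t ^ ϖ) ≤
        θ 0 ^ ϖ / (A - B * θ 0 ^ ϖ) * Real.exp (-(A * ϖ * t)) * A := by
      have hq : 0 ≤ θ t ^ ϖ / (A - B * θ t ^ ϖ) := div_nonneg (hupos t ht).le hdt.le
      calc θ t ^ ϖ / (A - B * θ t ^ ϖ) * (A - B * θ t ^ ϖ)
          ≤ θ t ^ ϖ / (A - B * θ t ^ ϖ) * A := mul_le_mul_of_nonneg_left hdle hq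
        _ ≤ θ 0 ^ ϖ / (A - B * θ 0 ^ ϖ) * Real.exp (-(A * ϖ * t)) * A :=
            mul_le_mul_of_nonneg_right hfirst hA.le
    rw [h1]
    calc θ t ^ ϖ / (A - B * θ t ^ ϖ) * (A - B * θ t ^ ϖ)
        ≤ θ 0 ^ ϖ / (A - B * θ 0 ^ ϖ) * Real.exp (-(A * ϖ * t)) * A := h2
      _ = A * θ 0 ^ ϖ / (A - B * θ 0 ^ ϖ) * Real.exp (-(A * ϖ * t)) := by ring
  have hR0 : (0:ℝ) ≤ A * θ 0 ^ ϖ / (A - B * θ 0 ^ ϖ) :=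
    div_nonneg (by positivity) h0d.le
  have hθt : θ t = (θ t ^ ϖ) ^ (1 / ϖ) := by
    rw [one_div, Real.rpow_rpow_inv (hpos t ht).le hϖ.ne']
  rw [hθt]
  calc (θ t ^ ϖ) ^ (1 / ϖ)
      ≤ (A * θ 0 ^ ϖ / (A - B * θ 0 ^ ϖ) * Real.exp (-(A * ϖ * t))) ^ (1 / ϖ) :=
        Real.rpow_le_rpow (hupos t ht).le hub (by positivity)
    _ = (A * θ 0 ^ ϖ / (A - B * θ 0 ^ ϖ)) ^ (1 / ϖ) * (Real.exp (-(A * ϖ * t))) ^ (1 / ϖ) :=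
        Real.mul_rpow hR0 (Real.exp_nonneg _)
    _ = (A * θ 0 ^ ϖ / (A - B * θ 0 ^ ϖ)) ^ (1 / ϖ) * Real.exp (-(A * t)) := by
        congr 1
        rw [Real.rpow_def_of_pos (Real.exp_pos _), Real.log_exp]
        congr 1
        field_simp
end
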